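/- Let q be an odd integer with 0 < q < m. Then for every t ∈ V_m, ξ⁻_q(t)·(ξ⁺_1(t) − ξ⁺_1(−q)) = q·ξ⁺_{q+1}(t) + ξ⁻_{q+1}(t) in R, where ξ⁺_1(−q) ∈ R is the value of ξ⁺_1 at the vertex −q. -/

import Mathlib

noncomputable section

open Finset MvPolynomial

/-- The coefficient ring `R = ℚ[α,δ]`, realized as polynomials in two variables. -/
abbrev Rpoly : Type := MvPolynomial (Fin 2) ℚ

/-- The variable `α`. -/
def va : Rpoly := X 0

/-- The variable `δ`. -/
def vd : Rpoly := X 1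

/-- `P⁻(a,b) = ∏_{k=a}^{b} (−α + k·δ)`. -/
def Pneg (a b : ℤ) : Rpoly :=
  ∏ k ∈ Finset.Icc a b, (-va + MvPolynomial.C (k : ℚ) * vd)

/-- `P⁺(a,b) = ∏_{k=a}^{b} (α + k·δ)`. -/
def Ppos (a b : ℤ) : Rpoly :=
  ∏ k ∈ Finset.Icc a b, (va + MvPolynomial.C (k : ℚ) * vd)

/-- Binomial coefficient `C(n,q)` (all uses have `n ≥ 0`). -/
def B (n : ℤ) (q : ℕ) : ℚ := (n.toNat).choose q

/-- The Knutson–Tao class `ξ⁺_q = ξ(m+q, m−q)`, as a function on vertices `t`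
(the vertex `t` encodes the pair `(m+t, m−t)`). -/
def xiP (m : ℤ) (q : ℕ) (t : ℤ) : Rpoly :=
  if (q : ℤ) ≤ t ∧ t ≤ m then
    MvPolynomial.C (B (⌈((t : ℚ) - (q : ℚ) + 1) / 2⌉ + q - 1) q) *
      Pneg (⌈((t : ℚ) - (q : ℚ) + 1) / 2⌉ - 1) (⌈((t : ℚ) - (q : ℚ) + 1) / 2⌉ + q - 2)
  else if -m ≤ t ∧ t ≤ -((q : ℤ) + 1) then
    MvPolynomial.C (B (⌈(-(t : ℚ) - (q : ℚ)) / 2⌉ + q - 1) q) *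
      Ppos (⌈(-(t : ℚ) - (q : ℚ)) / 2⌉ + 1) (⌈(-(t : ℚ) - (q : ℚ)) / 2⌉ + q)
  else 0

/-- The Knutson–Tao class `ξ⁻_q = ξ(m−q, m+q)`. -/
def xiM (m : ℤ) (q : ℕ) (t : ℤ) : Rpoly :=
  if (q : ℤ) + 1 ≤ t ∧ t ≤ m then
    MvPolynomial.C (B (⌈((t : ℚ) - (q : ℚ)) / 2⌉ + q - 1) q) *
      Pneg (⌈((t : ℚ) - (q : ℚ)) / 2⌉) (⌈((t : ℚ) - (q : ℚ)) / 2⌉ + q - 1)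
  else if -m ≤ t ∧ t ≤ -(q : ℤ) then
    MvPolynomial.C (B (⌈(-(t : ℚ) - (q : ℚ) + 1) / 2⌉ + q - 1) q) *
      Ppos (⌈(-(t : ℚ) - (q : ℚ) + 1) / 2⌉) (⌈(-(t : ℚ) - (q : ℚ) + 1) / 2⌉ + q - 1)
  else 0

/-- The weight of the vertex `t`: `w(t) = ((1−2t)/2)·α + (t(t−1)/2)·δ`. -/
def w (t : ℤ) : Rpoly :=
  MvPolynomial.C ((1 - 2 * (t : ℚ)) / 2) * va +
    MvPolynomial.C (((t : ℚ) * ((t : ℚ) - 1)) / 2) * vd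

-- ceiling helpers
lemma ceil_half_even (x : ℚ) (n : ℤ) (h : x = 2*n) : ⌈x/2⌉ = n := by
  rw [h, show (2*(n:ℚ))/2 = (n:ℚ) by ring, Int.ceil_intCast]
lemma ceil_half_odd (x : ℚ) (n : ℤ) (h : x = 2*n+1) : ⌈x/2⌉ = n+1 := by
  rw [h, show (2*(n:ℚ)+1)/2 = 1/2 + (n:ℚ) by ring, Int.ceil_add_intCast]
  have : ⌈(1/2:ℚ)⌉ = 1 := by rw [Int.ceil_eq_iff] <;> norm_num
  omega

-- product helpers
lemma Pneg_single (a : ℤ) : Pneg a a = -va + MvPolynomial.C (a:ℚ) * vd := by simp [Pneg]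
lemma Ppos_single (a : ℤ) : Ppos a a = va + MvPolynomial.C (a:ℚ) * vd := by simp [Ppos]
lemma Icc_bot (a b : ℤ) (h : a ≤ b) : Finset.Icc a b = insert a (Finset.Icc (a+1) b) := by
  ext x; simp [Finset.mem_Icc]; omega
lemma Icc_top (a b : ℤ) (h : a ≤ b) : Finset.Icc a b = insert b (Finset.Icc a (b-1)) := by
  ext x; simp [Finset.mem_Icc]; omega
lemma Pneg_bot (a b : ℤ) (h : a ≤ b) :
    Pneg a b = (-va + MvPolynomial.C (a:ℚ) * vd) * Pneg (a+1) b := by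
  rw [Pneg, Pneg, Icc_bot a b h, Finset.prod_insert (by simp)]
lemma Pneg_top (a b : ℤ) (h : a ≤ b) :
    Pneg a b = Pneg a (b-1) * (-va + MvPolynomial.C (b:ℚ) * vd) := by
  rw [Pneg, Pneg, Icc_top a b h, Finset.prod_insert (by simp), mul_comm]
lemma Ppos_bot (a b : ℤ) (h : a ≤ b) :
    Ppos a b = (va + MvPolynomial.C (a:ℚ) * vd) * Ppos (a+1) b := by
  rw [Ppos, Ppos, Icc_bot a b h, Finset.prod_insert (by simp)]
lemma Ppos_top (a b : ℤ) (h : a ≤ b) :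
    Ppos a b = Ppos a (b-1) * (va + MvPolynomial.C (b:ℚ) * vd) := by
  rw [Ppos, Ppos, Icc_top a b h, Finset.prod_insert (by simp), mul_comm]

-- branch evaluation
lemma xiP_pos_eq (m q : ℕ) (t : ℤ) (k : ℕ) (c a b : ℤ)
    (h1 : (q:ℤ) ≤ t) (h2 : t ≤ (m:ℤ))
    (hc : ⌈((t : ℚ) - (q : ℚ) + 1) / 2⌉ = c)
    (ha : c - 1 = a) (hk : c + q - 1 = (k:ℤ)) (hb : c + q - 2 = b) :
    xiP m q t = MvPolynomial.C (k.choose q : ℚ) * Pneg a b := by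
  rw [xiP, if_pos ⟨h1,h2⟩, hc, ha, hb, B, show (c+(q:ℤ)-1).toNat = k by omega]
lemma xiP_neg_eq (m q : ℕ) (t : ℤ) (k : ℕ) (c a b : ℤ)
    (h0 : ¬((q:ℤ) ≤ t ∧ t ≤ (m:ℤ)))
    (h1 : -(m:ℤ) ≤ t) (h2 : t ≤ -((q:ℤ)+1))
    (hc : ⌈(-(t : ℚ) - (q : ℚ)) / 2⌉ = c)
    (ha : c + 1 = a) (hk : c + q - 1 = (k:ℤ)) (hb : c + q = b) :
    xiP m q t = MvPolynomial.C (k.choose q : ℚ) * Ppos a b := by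
  rw [xiP, if_neg h0, if_pos ⟨h1,h2⟩, hc, ha, B, show (c+(q:ℤ)-1).toNat = k by omega, hb]
lemma xiM_pos_eq (m q : ℕ) (t : ℤ) (k : ℕ) (c a b : ℤ)
    (h1 : (q:ℤ)+1 ≤ t) (h2 : t ≤ (m:ℤ))
    (hc : ⌈((t : ℚ) - (q : ℚ)) / 2⌉ = c)
    (ha : c = a) (hk : c + q - 1 = (k:ℤ)) (hb : c + q - 1 = b) :
    xiM m q t = MvPolynomial.C (k.choose q : ℚ) * Pneg a b := by
  rw [xiM, if_pos ⟨h1,h2⟩, hc, B, show (c+(q:ℤ)-1).toNat = k by omega, hb, ha]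
lemma xiM_neg_eq (m q : ℕ) (t : ℤ) (k : ℕ) (c a b : ℤ)
    (h0 : ¬((q:ℤ)+1 ≤ t ∧ t ≤ (m:ℤ)))
    (h1 : -(m:ℤ) ≤ t) (h2 : t ≤ -(q:ℤ))
    (hc : ⌈(-(t : ℚ) - (q : ℚ) + 1) / 2⌉ = c)
    (ha : c = a) (hk : c + q - 1 = (k:ℤ)) (hb : c + q - 1 = b) :
    xiM m q t = MvPolynomial.C (k.choose q : ℚ) * Ppos a b := by
  rw [xiM, if_neg h0, if_pos ⟨h1,h2⟩, hc, B, show (c+(q:ℤ)-1).toNat = k by omega, hb, ha]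
lemma xiP_zero (m q : ℕ) (t : ℤ)
    (h1 : ¬((q:ℤ) ≤ t ∧ t ≤ (m:ℤ))) (h2 : ¬(-(m:ℤ) ≤ t ∧ t ≤ -((q:ℤ)+1))) :
    xiP m q t = 0 := by rw [xiP, if_neg h1, if_neg h2]
lemma xiM_zero (m q : ℕ) (t : ℤ)
    (h1 : ¬((q:ℤ)+1 ≤ t ∧ t ≤ (m:ℤ))) (h2 : ¬(-(m:ℤ) ≤ t ∧ t ≤ -(q:ℤ))) :
    xiM m q t = 0 := by rw [xiM, if_neg h1, if_neg h2]

-- choose identities over ℤ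
lemma chooseZ1 (n k : ℕ) : ((n:ℤ)+1) * n.choose k = ((k:ℤ)+1) * (n+1).choose (k+1) := by
  have := Nat.add_one_mul_choose_eq n k
  zify at this; push_cast at this; linarith
lemma chooseZsucc (n k : ℕ) : ((n+1).choose (k+1) : ℤ) = n.choose k + n.choose (k+1) := by
  exact_mod_cast Nat.choose_succ_succ n k
lemma chooseZright (n k : ℕ) (h : k ≤ n) :
    (n.choose (k+1) : ℤ) * (k+1) = n.choose k * ((n:ℤ) - k) := by
  have := Nat.choose_succ_right_eq n k
  zify [h] at this; linarith
lemma chooseZ2 (n k : ℕ) (h : k ≤ n) :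
    (n:ℤ) * n.choose k = (k:ℤ) * (n+1).choose (k+1) + n.choose (k+1) := by
  have h1 := chooseZsucc n k
  have h2 := chooseZright n k h
  linear_combination (-(k:ℤ)) * h1 - h2
lemma chooseZ3 (n k : ℕ) (h : k ≤ n) :
    ((n:ℤ)-k+1) * n.choose k = (k:ℤ) * n.choose (k+1) + (n+1).choose (k+1) := by
  have h1 := chooseZsucc n k
  have h2 := chooseZright n k h
  linear_combination -h1 - h2
lemma chooseZ4 (n k : ℕ) (h : k ≤ n) :
    ((n:ℤ)-k) * n.choose k = ((k:ℤ)+1) * n.choose (k+1) := by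
  have h2 := chooseZright n k h
  linear_combination -h2

-- value of xiP m 1 (-q) for odd q
lemma xiP1_negq (m p : ℕ) (hqm : 2*p+1 < m) :
    xiP m 1 (-((2*p+1 : ℕ) : ℤ)) = MvPolynomial.C (p:ℚ) * (va + MvPolynomial.C ((p:ℚ)+1) * vd) := by
  rcases Nat.eq_zero_or_pos p with hp | hp
  · subst hp
    rw [xiP_zero _ _ _ (by omega) (by omega)]
    simp
  · rw [xiP_neg_eq m 1 _ p (p:ℤ) ((p:ℤ)+1) ((p:ℤ)+1)
      (by omega) (by omega) (by omega)
      (ceil_half_even _ (p:ℤ) (by push_cast; ring)) (by ring)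
      (by push_cast; ring) (by push_cast; ring)]
    rw [Ppos_single, Nat.choose_one_right]
    push_cast
    ring


/-- for odd `0 < q < m`,
`ξ⁻_q · (ξ⁺_1 − ξ⁺_1(−q)) = q·ξ⁺_{q+1} + ξ⁻_{q+1}` pointwise on `V_m`. -/
theorem statement11 (m : ℕ) (hm : 1 ≤ m) (q : ℕ) (hodd : Odd q)
    (hq0 : 0 < q) (hqm : q < m)
    (t : ℤ) (ht1 : -(m : ℤ) ≤ t) (ht2 : t ≤ (m : ℤ)) :
    xiM m q t * (xiP m 1 t - xiP m 1 (-(q : ℤ))) =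
      (q : Rpoly) * xiP m (q + 1) t + xiM m (q + 1) t := by
  obtain ⟨p, hp⟩ := hodd
  subst hp
  by_cases hA : ((2*p+1 : ℕ) : ℤ) < t
  · rcases Int.even_or_odd (t - ((2*p+1:ℕ):ℤ)) with ⟨j, hj⟩ | ⟨j, hj⟩
    · -- case A : t = q + 2(s+1)
      obtain ⟨s, hs⟩ : ∃ s:ℕ, t = ((2*p+1:ℕ):ℤ) + 2*((s:ℤ)+1) := ⟨(j-1).toNat, by omega⟩
      rw [xiM_pos_eq m (2*p+1) t (2*p+s+1) _ ((s:ℤ)+1) ((s:ℤ)+2*p+1)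
            (by omega) ht2 (ceil_half_even _ ((s:ℤ)+1) (by rw [hs]; push_cast; ring))
            rfl (by push_cast; ring) (by push_cast; ring),
          xiP_pos_eq m 1 t (p+s+2) _ ((p:ℤ)+(s:ℤ)+1) ((p:ℤ)+(s:ℤ)+1)
            (by omega) ht2 (ceil_half_odd _ ((p:ℤ)+(s:ℤ)+1) (by rw [hs]; push_cast; ring))
            (by ring) (by push_cast; ring) (by push_cast; ring),
          xiP1_negq m p hqm,
          xiP_pos_eq m (2*p+1+1) t (2*p+s+2) _ (s:ℤ) ((s:ℤ)+2*p+1)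
            (by omega) ht2 (ceil_half_even _ ((s:ℤ)+1) (by rw [hs]; push_cast; ring))
            (by ring) (by push_cast; ring) (by push_cast; ring),
          xiM_pos_eq m (2*p+1+1) t (2*p+s+2) _ ((s:ℤ)+1) ((s:ℤ)+2*p+2)
            (by omega) ht2 (ceil_half_odd _ (s:ℤ) (by rw [hs]; push_cast; ring))
            rfl (by push_cast; ring) (by push_cast; ring),
          Pneg_single,
          Pneg_bot (s:ℤ) ((s:ℤ)+2*p+1) (by omega),
          Pneg_top ((s:ℤ)+1) ((s:ℤ)+2*p+2) (by omega),
          show ((s:ℤ)+2*p+2)-1 = (s:ℤ)+2*p+1 by ring]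
      have key := congrArg (fun z : ℤ => (z : Rpoly)) (chooseZ1 (2*p+s+1) (2*p+1))
      push_cast at key
      simp only [show 2*p+s+1+1 = 2*p+s+2 by ring] at key
      push_cast
      simp only [Nat.choose_one_right, map_add, map_mul, map_one, map_natCast, map_ofNat]
      push_cast
      linear_combination ((-va + (((s:ℕ):Rpoly)+1)*vd) * Pneg ((s:ℤ)+1) ((s:ℤ)+2*p+1)) * key
    · -- case B : t = q + 2s + 1
      obtain ⟨s, hs⟩ : ∃ s:ℕ, t = ((2*p+1:ℕ):ℤ) + 2*(s:ℤ) + 1 := ⟨j.toNat, by omega⟩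
      have hxm : xiM m (2*p+1+1) t =
          MvPolynomial.C (((2*p+s+1).choose (2*p+1+1) : ℕ) : ℚ) * Pneg (s:ℤ) ((s:ℤ)+2*p+1) := by
        rcases Nat.eq_zero_or_pos s with h0 | h0
        · subst h0
          rw [xiM_zero _ _ _ (by omega) (by omega),
            show 2*p+0+1 = 2*p+1 by ring,
            Nat.choose_eq_zero_of_lt (show 2*p+1 < 2*p+1+1 by omega)]
          simp
        · exact xiM_pos_eq m (2*p+1+1) t (2*p+s+1) _ (s:ℤ) ((s:ℤ)+2*p+1)
            (by omega) ht2 (ceil_half_even _ (s:ℤ) (by rw [hs]; push_cast; ring))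
            rfl (by push_cast; ring) (by push_cast; ring)
      rw [xiM_pos_eq m (2*p+1) t (2*p+s+1) _ ((s:ℤ)+1) ((s:ℤ)+2*p+1)
            (by omega) ht2 (ceil_half_odd _ (s:ℤ) (by rw [hs]; push_cast; ring))
            rfl (by push_cast; ring) (by push_cast; ring),
          xiP_pos_eq m 1 t (p+s+1) _ ((p:ℤ)+(s:ℤ)) ((p:ℤ)+(s:ℤ))
            (by omega) ht2 (ceil_half_even _ ((p:ℤ)+(s:ℤ)+1) (by rw [hs]; push_cast; ring))
            (by ring) (by push_cast; ring) (by push_cast; ring),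
          xiP1_negq m p hqm,
          xiP_pos_eq m (2*p+1+1) t (2*p+s+2) _ (s:ℤ) ((s:ℤ)+2*p+1)
            (by omega) ht2 (ceil_half_odd _ (s:ℤ) (by rw [hs]; push_cast; ring))
            (by ring) (by push_cast; ring) (by push_cast; ring),
          hxm,
          Pneg_single,
          Pneg_bot (s:ℤ) ((s:ℤ)+2*p+1) (by omega)]
      have key := congrArg (fun z : ℤ => (z : Rpoly)) (chooseZ2 (2*p+s+1) (2*p+1) (by omega))
      push_cast at key
      simp only [show 2*p+s+1+1 = 2*p+s+2 by ring] at key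
      push_cast
      simp only [Nat.choose_one_right, map_add, map_mul, map_one, map_natCast, map_ofNat]
      push_cast
      linear_combination ((-va + ((s:ℕ):Rpoly)*vd) * Pneg ((s:ℤ)+1) ((s:ℤ)+2*p+1)) * key
  · by_cases hB : t < -((2*p+1:ℕ):ℤ)
    · rcases Int.even_or_odd (t + ((2*p+1:ℕ):ℤ)) with ⟨j, hj⟩ | ⟨j, hj⟩
      · -- case D : t = -q - 2(s+1)
        obtain ⟨s, hs⟩ : ∃ s:ℕ, t = -((2*p+1:ℕ):ℤ) - 2*((s:ℤ)+1) := ⟨(-j-1).toNat, by omega⟩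
        rw [xiM_neg_eq m (2*p+1) t (2*p+s+2) _ ((s:ℤ)+2) ((s:ℤ)+2*p+2)
              (by omega) ht1 (by omega)
              (ceil_half_odd _ ((s:ℤ)+1) (by rw [hs]; push_cast; ring))
              (by ring) (by push_cast; ring) (by push_cast; ring),
            xiP_neg_eq m 1 t (p+s+1) _ ((p:ℤ)+(s:ℤ)+2) ((p:ℤ)+(s:ℤ)+2)
              (by omega) ht1 (by omega)
              (ceil_half_even _ ((p:ℤ)+(s:ℤ)+1) (by rw [hs]; push_cast; ring))
              (by ring) (by push_cast; ring) (by push_cast; ring),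
            xiP1_negq m p hqm,
            xiP_neg_eq m (2*p+1+1) t (2*p+s+2) _ ((s:ℤ)+2) ((s:ℤ)+2*p+3)
              (by omega) ht1 (by omega)
              (ceil_half_odd _ (s:ℤ) (by rw [hs]; push_cast; ring))
              (by ring) (by push_cast; ring) (by push_cast; ring),
            xiM_neg_eq m (2*p+1+1) t (2*p+s+2) _ ((s:ℤ)+1) ((s:ℤ)+2*p+2)
              (by omega) ht1 (by omega)
              (ceil_half_even _ ((s:ℤ)+1) (by rw [hs]; push_cast; ring))
              rfl (by push_cast; ring) (by push_cast; ring),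
            Ppos_single,
            Ppos_top ((s:ℤ)+2) ((s:ℤ)+2*p+3) (by omega),
            show ((s:ℤ)+2*p+3)-1 = (s:ℤ)+2*p+2 by ring,
            Ppos_bot ((s:ℤ)+1) ((s:ℤ)+2*p+2) (by omega),
            show (s:ℤ)+1+1 = (s:ℤ)+2 by ring]
        have key := congrArg (fun z : ℤ => (z : Rpoly)) (chooseZ4 (2*p+s+2) (2*p+1) (by omega))
        push_cast at key
        push_cast
        simp only [Nat.choose_one_right, map_add, map_mul, map_one, map_natCast, map_ofNat]
        push_cast
        linear_combination
          ((va + (((s:ℕ):Rpoly)+2*((p:ℕ):Rpoly)+2)*vd) * Ppos ((s:ℤ)+2) ((s:ℤ)+2*p+2)) * key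
      · -- case C : t = -q - 2s - 1
        obtain ⟨s, hs⟩ : ∃ s:ℕ, t = -((2*p+1:ℕ):ℤ) - 2*(s:ℤ) - 1 := ⟨(-j-1).toNat, by omega⟩
        have hxp : xiP m (2*p+1+1) t =
            MvPolynomial.C (((2*p+s+1).choose (2*p+1+1) : ℕ) : ℚ) * Ppos ((s:ℤ)+1) ((s:ℤ)+2*p+2) := by
          rcases Nat.eq_zero_or_pos s with h0 | h0
          · subst h0
            rw [xiP_zero _ _ _ (by omega) (by omega),
              show 2*p+0+1 = 2*p+1 by ring,
              Nat.choose_eq_zero_of_lt (show 2*p+1 < 2*p+1+1 by omega)]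
            simp
          · exact xiP_neg_eq m (2*p+1+1) t (2*p+s+1) _ ((s:ℤ)+1) ((s:ℤ)+2*p+2)
              (by omega) ht1 (by omega)
              (ceil_half_even _ (s:ℤ) (by rw [hs]; push_cast; ring))
              (by ring) (by push_cast; ring) (by push_cast; ring)
        rw [xiM_neg_eq m (2*p+1) t (2*p+s+1) _ ((s:ℤ)+1) ((s:ℤ)+2*p+1)
              (by omega) ht1 (by omega)
              (ceil_half_even _ ((s:ℤ)+1) (by rw [hs]; push_cast; ring))
              rfl (by push_cast; ring) (by push_cast; ring),
            xiP_neg_eq m 1 t (p+s+1) _ ((p:ℤ)+(s:ℤ)+2) ((p:ℤ)+(s:ℤ)+2)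
              (by omega) ht1 (by omega)
              (ceil_half_odd _ ((p:ℤ)+(s:ℤ)) (by rw [hs]; push_cast; ring))
              (by ring) (by push_cast; ring) (by push_cast; ring),
            xiP1_negq m p hqm,
            hxp,
            xiM_neg_eq m (2*p+1+1) t (2*p+s+2) _ ((s:ℤ)+1) ((s:ℤ)+2*p+2)
              (by omega) ht1 (by omega)
              (ceil_half_odd _ (s:ℤ) (by rw [hs]; push_cast; ring))
              rfl (by push_cast; ring) (by push_cast; ring),
            Ppos_single,
            Ppos_top ((s:ℤ)+1) ((s:ℤ)+2*p+2) (by omega),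
            show ((s:ℤ)+2*p+2)-1 = (s:ℤ)+2*p+1 by ring]
        have key := congrArg (fun z : ℤ => (z : Rpoly)) (chooseZ3 (2*p+s+1) (2*p+1) (by omega))
        push_cast at key
        simp only [show 2*p+s+1+1 = 2*p+s+2 by ring] at key
        push_cast
        simp only [Nat.choose_one_right, map_add, map_mul, map_one, map_natCast, map_ofNat]
        push_cast
        linear_combination
          ((va + (((s:ℕ):Rpoly)+2*((p:ℕ):Rpoly)+2)*vd) * Ppos ((s:ℤ)+1) ((s:ℤ)+2*p+1)) * key
    · by_cases hC : t = -((2*p+1:ℕ):ℤ)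
      · rw [hC, sub_self, mul_zero,
          xiP_zero m (2*p+1+1) _ (by omega) (by omega),
          xiM_zero m (2*p+1+1) _ (by omega) (by omega)]
        simp
      · rw [xiM_zero m (2*p+1) t (by omega) (by omega),
          xiP_zero m (2*p+1+1) t (by omega) (by omega),
          xiM_zero m (2*p+1+1) t (by omega) (by omega)]
        simp
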